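/- Let n, m, k, ℓ, c be positive integers with n = m = k + ℓ and c ≠ 2. Then the equation x^n + y^m = c·x^k·y^ℓ has no solution in positive integers x, y. -/

import Mathlib

theorem case1_cne2 (n m k ℓ c : ℕ) (hn : 0 < n) (hm : 0 < m) (hk : 0 < k)
    (hℓ : 0 < ℓ) (hc : 0 < c) (h1 : n = m) (h2 : n = k + ℓ) (hc2 : c ≠ 2) :
    ¬ ∃ x y : ℕ, 0 < x ∧ 0 < y ∧ x ^ n + y ^ m = c * x ^ k * y ^ ℓ := by
  rintro ⟨x, y, hx, hy, heq⟩
  subst h1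
  set d := Nat.gcd x y with hd
  have hdpos : 0 < d := Nat.gcd_pos_of_pos_left y hx
  obtain ⟨a, ha⟩ := Nat.gcd_dvd_left x y
  obtain ⟨b, hb⟩ := Nat.gcd_dvd_right x y
  have hxa : x / d = a := by rw [ha]; exact Nat.mul_div_cancel_left a hdpos
  have hyb : y / d = b := by rw [hb]; exact Nat.mul_div_cancel_left b hdpos
  have hco : Nat.Coprime a b := by
    rw [← hxa, ← hyb]; exact Nat.coprime_div_gcd_div_gcd hdpos
  have hapos : 0 < a := by
    rcases Nat.eq_zero_or_pos a with h | h
    · rw [h, mul_zero] at ha; omega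
    · exact h
  have hbpos : 0 < b := by
    rcases Nat.eq_zero_or_pos b with h | h
    · rw [h, mul_zero] at hb; omega
    · exact h
  have key : a ^ n + b ^ n = c * a ^ k * b ^ ℓ := by
    have : d ^ n * (a ^ n + b ^ n) = d ^ n * (c * a ^ k * b ^ ℓ) := by
      have heq' : (d * a) ^ n + (d * b) ^ n = c * (d * a) ^ k * (d * b) ^ ℓ := by
        rw [← ha, ← hb]; exact heq
      calc d ^ n * (a ^ n + b ^ n) = (d * a) ^ n + (d * b) ^ n := by ring
        _ = c * (d * a) ^ k * (d * b) ^ ℓ := heq'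
        _ = d ^ (k + ℓ) * (c * a ^ k * b ^ ℓ) := by ring
        _ = d ^ n * (c * a ^ k * b ^ ℓ) := by rw [← h2]
    exact Nat.eq_of_mul_eq_mul_left (Nat.pow_pos hdpos) this
  have hadvd : a ∣ b ^ n := by
    have h1 : a ∣ a ^ n + b ^ n := by
      rw [key]
      exact Dvd.dvd.mul_right (Dvd.dvd.mul_left (dvd_pow_self a hk.ne') c) _
    exact (Nat.dvd_add_right (dvd_pow_self a hn.ne')).mp h1
  have hbdvd : b ∣ a ^ n := by
    have h1 : b ∣ a ^ n + b ^ n := by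
      rw [key]
      exact Dvd.dvd.mul_left (dvd_pow_self b hℓ.ne') _
    exact (Nat.dvd_add_left (dvd_pow_self b hn.ne')).mp h1
  have ha1 : a = 1 := (hco.pow_right n).eq_one_of_dvd hadvd
  have hb1 : b = 1 := (hco.symm.pow_right n).eq_one_of_dvd hbdvd
  rw [ha1, hb1] at key
  simp at key
  omega
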